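/- Suppose p ≥ 3, 1 ≤ n_1 ≤ n_2 ≤ … ≤ n_p, and N_1 := n_1 + … + n_{p−1} < n_p. Then for every x ∈ m the centralizer of x in k has real dimension at least 1 + (n_p − N_1)², i.e. dim_ℝ {Z ∈ k : Zx = xZ} ≥ 1 + (n_p − N_1)², and this lower bound is attained at some real skew-symmetric x0 ∈ m̃ = m ∩ so(n). -/

import Mathlib

open Module Matrix

/-- The centralizer of `x` in `k = u(n_1) ⊕ … ⊕ u(n_p)` (block-diagonal
skew-Hermitian matrices), as a real subspace of the matrix space. -/
noncomputable def kxCent (n p : ℕ) (blk : Fin n → Fin p)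
    (x : Matrix (Fin n) (Fin n) ℂ) : Submodule ℝ (Matrix (Fin n) (Fin n) ℂ) where
  carrier := {Z | Zᴴ = -Z ∧ (∀ i j, blk i ≠ blk j → Z i j = 0) ∧ Z * x = x * Z}
  add_mem' := by
    intro Y Z hY hZ
    obtain ⟨hY1, hY2, hY3⟩ := hY
    obtain ⟨hZ1, hZ2, hZ3⟩ := hZ
    refine ⟨?_, ?_, ?_⟩
    · rw [conjTranspose_add, hY1, hZ1, neg_add]
    · intro i j hij
      simp [Matrix.add_apply, hY2 i j hij, hZ2 i j hij]
    · rw [Matrix.add_mul, Matrix.mul_add, hY3, hZ3]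
  zero_mem' := by
    refine ⟨by simp, by simp, by simp⟩
  smul_mem' := by
    intro c Z hZ
    obtain ⟨hZ1, hZ2, hZ3⟩ := hZ
    refine ⟨?_, ?_, ?_⟩
    · rw [conjTranspose_smul, hZ1, star_trivial, smul_neg]
    · intro i j hij
      simp [Matrix.smul_apply, hZ2 i j hij]
    · rw [Matrix.smul_mul, Matrix.mul_smul, hZ3]

/-! ### Auxiliary definitions for the lower bound -/

/-- The map sending `v : ℂ^T` to `s ↦ ∑_t conj (x t s) * v t`. -/
noncomputable def phiAux {n p : ℕ} (blk : Fin n → Fin p) (last : Fin p)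
    (x : Matrix (Fin n) (Fin n) ℂ) :
    ({i : Fin n // blk i = last} → ℂ) →ₗ[ℂ] ({i : Fin n // blk i ≠ last} → ℂ) where
  toFun v s := ∑ t : {i : Fin n // blk i = last}, star (x t.1 s.1) * v t
  map_add' v w := by
    funext s
    simp [mul_add, Finset.sum_add_distrib]
  map_smul' c v := by
    funext s
    simp only [Pi.smul_apply, smul_eq_mul, RingHom.id_apply]
    rw [Finset.mul_sum]
    exact Finset.sum_congr rfl fun t _ => by ring

/-- Extension by zero of a function on the `last` block. -/
noncomputable def extAux {n p : ℕ} (blk : Fin n → Fin p) (last : Fin p) :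
    ({i : Fin n // blk i = last} → ℂ) →ₗ[ℂ] (Fin n → ℂ) where
  toFun v i := if h : blk i = last then v ⟨i, h⟩ else 0
  map_add' v w := by funext i; by_cases h : blk i = last <;> simp [h]
  map_smul' c v := by funext i; by_cases h : blk i = last <;> simp [h]

lemma extAux_injective {n p : ℕ} (blk : Fin n → Fin p) (last : Fin p) :
    LinearMap.ker (extAux blk last) = ⊥ := by
  rw [LinearMap.ker_eq_bot']
  intro v hv
  funext t
  have := congrFun hv t.1
  simpa [extAux, t.2] using this

/-- The real-linear parametrization of skew-hermitian `m × m` matrices. -/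
noncomputable def amat {m : ℕ} : (Fin m × Fin m → ℝ) →ₗ[ℝ] Matrix (Fin m) (Fin m) ℂ where
  toFun f := Matrix.of fun k l =>
    if k = l then (f (k, k) : ℂ) * Complex.I
    else if (k : ℕ) < (l : ℕ) then (f (k, l) : ℂ) + (f (l, k) : ℂ) * Complex.I
    else -(f (l, k) : ℂ) + (f (k, l) : ℂ) * Complex.I
  map_add' f g := by
    ext k l
    simp only [Matrix.of_apply, Matrix.add_apply, Pi.add_apply, Complex.ofReal_add]
    split_ifs <;> ring
  map_smul' c f := by
    ext k l
    simp only [Matrix.of_apply, Matrix.smul_apply, Pi.smul_apply, smul_eq_mul,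
      Complex.ofReal_mul, RingHom.id_apply, Complex.real_smul]
    split_ifs <;> ring

lemma amat_skew {m : ℕ} (f : Fin m × Fin m → ℝ) : (amat f)ᴴ = -(amat f) := by
  ext k l
  simp only [conjTranspose_apply, Matrix.neg_apply, amat, LinearMap.coe_mk, AddHom.coe_mk,
    Matrix.of_apply]
  rcases lt_trichotomy (k : ℕ) (l : ℕ) with h | h | h
  · have h1 : k ≠ l := fun e => by simp [e] at h
    have h2 : l ≠ k := h1.symm
    have h3 : ¬ ((l : ℕ) < (k : ℕ)) := by omega
    rw [if_neg h2, if_neg h3, if_neg h1, if_pos h]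
    simp [Complex.ext_iff]
  · have h1 : k = l := Fin.ext h
    subst h1
    simp [Complex.ext_iff]
  · have h1 : k ≠ l := fun e => by simp [e] at h
    have h2 : l ≠ k := h1.symm
    have h3 : ¬ ((k : ℕ) < (l : ℕ)) := by omega
    rw [if_neg h2, if_pos h, if_neg h1, if_neg h3]
    simp [Complex.ext_iff]

lemma amat_inj {m : ℕ} (f : Fin m × Fin m → ℝ) (h : amat f = 0) : f = 0 := by
  have hent : ∀ k l, amat f k l = 0 := fun k l => by rw [h]; rfl
  funext kl
  obtain ⟨k, l⟩ := kl
  rcases lt_trichotomy (k : ℕ) (l : ℕ) with hlt | heq | hgt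
  · have h1 : k ≠ l := fun e => by simp [e] at hlt
    have := hent k l
    simp only [amat, LinearMap.coe_mk, AddHom.coe_mk, Matrix.of_apply, if_neg h1,
      if_pos hlt] at this
    have := congrArg Complex.re this
    simpa using this
  · have h1 : k = l := Fin.ext heq
    subst h1
    have := hent k k
    simp only [amat, LinearMap.coe_mk, AddHom.coe_mk, Matrix.of_apply, if_pos rfl] at this
    have := congrArg Complex.im this
    simpa using this
  · have h1 : k ≠ l := fun e => by simp [e] at hgt
    have h3 : ¬ ((k : ℕ) < (l : ℕ)) := by omega
    have := hent k l
    simp only [amat, LinearMap.coe_mk, AddHom.coe_mk, Matrix.of_apply, if_neg h1,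
      if_neg h3] at this
    have := congrArg Complex.im this
    simpa using this

theorem lower_aux {n p : ℕ} (blk : Fin n → Fin p) (last : Fin p)
    (hSne : ∃ i, blk i ≠ last)
    (x : Matrix (Fin n) (Fin n) ℂ) (hx1 : xᴴ = -x)
    (hx2 : ∀ i j, blk i = blk j → x i j = 0) :
    1 + (Fintype.card {i : Fin n // blk i = last} -
      Fintype.card {i : Fin n // blk i ≠ last}) ^ 2
      ≤ finrank ℝ (kxCent n p blk x) := by
  classical
  obtain ⟨s0, hs0⟩ := hSne
  set φ := phiAux blk last x with hφ
  set m := Fintype.card {i : Fin n // blk i = last} -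
    Fintype.card {i : Fin n // blk i ≠ last} with hm
  have hker : m ≤ finrank ℂ (LinearMap.ker φ) := by
    have h1 := LinearMap.finrank_range_add_finrank_ker φ
    have h2 : finrank ℂ (LinearMap.range φ)
        ≤ Fintype.card {i : Fin n // blk i ≠ last} := by
      have h3 := Submodule.finrank_le (LinearMap.range φ)
      rwa [Module.finrank_pi] at h3
    rw [Module.finrank_pi] at h1
    omega
  set bK := Module.finBasis ℂ (LinearMap.ker φ) with hbK
  set vec : Fin m → ({i : Fin n // blk i = last} → ℂ) :=
    fun k => (bK (Fin.castLE hker k) : _) with hvec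
  have hvec_ker : ∀ k, φ (vec k) = 0 := fun k =>
    LinearMap.mem_ker.mp (bK (Fin.castLE hker k)).2
  have hvec_indep : LinearIndependent ℂ vec := by
    have h := bK.linearIndependent.map' (LinearMap.ker φ).subtype
      (Submodule.ker_subtype _)
    exact h.comp (Fin.castLE hker) (Fin.castLE_injective _)
  set E : Matrix (Fin n) (Fin m) ℂ :=
    Matrix.of (fun i k => if h : blk i = last then vec k ⟨i, h⟩ else 0) with hE
  have hErow : ∀ i, blk i ≠ last → ∀ k, E i k = 0 := by
    intro i hi k
    simp [hE, hi]
  -- sums of functions supported on the last block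
  have sumT : ∀ g : Fin n → ℂ, (∀ i, blk i ≠ last → g i = 0) →
      ∑ i, g i = ∑ t : {i : Fin n // blk i = last}, g t.1 := by
    intro g hg
    have h1 : ∑ i ∈ Finset.univ.filter (fun i => blk i = last), g i
        = ∑ t : {i : Fin n // blk i = last}, g t.1 :=
      Finset.sum_subtype _ (by simp) g
    rw [← h1, Finset.sum_filter_of_ne]
    intro i _ hgi
    by_contra hbi
    exact hgi (hg i hbi)
  have key1 : Eᴴ * x = 0 := by
    ext k j
    rw [Matrix.mul_apply, Matrix.zero_apply]
    by_cases hj : blk j = last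
    · apply Finset.sum_eq_zero
      intro i _
      by_cases hi : blk i = last
      · rw [conjTranspose_apply, hx2 i j (hi.trans hj.symm), mul_zero]
      · rw [conjTranspose_apply, hErow i hi k, star_zero, zero_mul]
    · rw [sumT _ (fun i hi => by rw [conjTranspose_apply, hErow i hi k, star_zero, zero_mul])]
      have h0 : (∑ t : {i : Fin n // blk i = last}, star (x t.1 j) * vec k t) = 0 :=
        congrFun (hvec_ker k) ⟨j, hj⟩
      calc ∑ t : {i : Fin n // blk i = last}, (Eᴴ) k t.1 * x t.1 j
          = star (∑ t : {i : Fin n // blk i = last}, star (x t.1 j) * vec k t) := by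
            rw [star_sum]
            refine Finset.sum_congr rfl fun t _ => ?_
            rw [conjTranspose_apply, star_mul', star_star]
            rw [show E t.1 k = vec k t from by simp [hE, t.2]]
            ring
        _ = 0 := by rw [h0, star_zero]
  have key2 : x * E = 0 := by
    have h := congrArg conjTranspose key1
    rw [conjTranspose_mul, conjTranspose_conjTranspose, hx1, conjTranspose_zero,
      Matrix.neg_mul] at h
    exact neg_eq_zero.mp h
  -- injectivity of multiplication by E
  have hEcols : LinearIndependent ℂ (fun k => (extAux blk last) (vec k)) :=
    hvec_indep.map' (extAux blk last) (extAux_injective blk last)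
  have hmv : ∀ y : Fin m → ℂ, E.mulVec y = 0 → y = 0 := by
    intro y hy
    have h0 : (∑ k, y k • (extAux blk last) (vec k)) = (0 : Fin n → ℂ) := by
      funext i
      have := congrFun hy i
      rw [Matrix.mulVec, dotProduct] at this
      rw [Finset.sum_apply]
      rw [← this]
      refine Finset.sum_congr rfl fun k _ => ?_
      simp only [Pi.smul_apply, smul_eq_mul, extAux, LinearMap.coe_mk, AddHom.coe_mk]
      by_cases h : blk i = last
      · simp [hE, h, mul_comm]
      · simp [hE, h]
    have := Fintype.linearIndependent_iff.mp hEcols y h0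
    funext k; exact this k
  have hEinj : ∀ {κ : Type} (M : Matrix (Fin m) κ ℂ), E * M = 0 → M = 0 := by
    intro κ M hEM
    have hent : ∀ i j, (E * M) i j = 0 := fun i j => by rw [hEM]; rfl
    ext k j
    have hcol : E.mulVec (fun k => M k j) = 0 := by
      funext i
      have := hent i j
      rw [Matrix.mul_apply] at this
      simpa [Matrix.mulVec, dotProduct] using this
    have := hmv _ hcol
    exact congrFun this k
  -- the linear map Ψ into the centralizer
  set Ψ : (ℝ × (Fin m × Fin m → ℝ)) →ₗ[ℝ] Matrix (Fin n) (Fin n) ℂ :=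
    { toFun := fun cf => ((cf.1 : ℂ) * Complex.I) • (1 : Matrix (Fin n) (Fin n) ℂ)
        + E * amat cf.2 * Eᴴ
      map_add' := by
        intro a b
        simp only [Prod.fst_add, Prod.snd_add, map_add, Complex.ofReal_add, add_mul, add_smul,
          Matrix.add_mul, Matrix.mul_add]
        abel
      map_smul' := by
        intro r a
        have h1 : amat (r • a.2) = r • amat a.2 := map_smul amat r a.2
        have h3 : ((↑(r • a.1) : ℂ)) * Complex.I = (r • ((a.1 : ℂ) * Complex.I) : ℂ) := by
          rw [smul_eq_mul, Complex.real_smul]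
          push_cast
          ring
        show ((↑(r • a.1) : ℂ) * Complex.I) • (1 : Matrix (Fin n) (Fin n) ℂ)
            + E * amat (r • a.2) * Eᴴ
            = r • (((a.1 : ℂ) * Complex.I) • (1 : Matrix (Fin n) (Fin n) ℂ)
              + E * amat a.2 * Eᴴ)
        rw [h1, h3, Matrix.mul_smul, Matrix.smul_mul, smul_add, smul_assoc] } with hΨ
  have hmem : ∀ cf, Ψ cf ∈ kxCent n p blk x := by
    intro cf
    have hΨcf : Ψ cf = ((cf.1 : ℂ) * Complex.I) • (1 : Matrix (Fin n) (Fin n) ℂ)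
        + E * amat cf.2 * Eᴴ := rfl
    rw [hΨcf]
    refine ⟨?_, ?_, ?_⟩
    · have hassoc : (E * amat cf.2 * Eᴴ)ᴴ = E * (amat cf.2)ᴴ * Eᴴ := by
        rw [conjTranspose_mul, conjTranspose_mul, conjTranspose_conjTranspose, Matrix.mul_assoc]
      rw [conjTranspose_add, conjTranspose_smul, conjTranspose_one, hassoc, amat_skew]
      have hstar : star ((cf.1 : ℂ) * Complex.I) = -((cf.1 : ℂ) * Complex.I) := by
        simp [Complex.ext_iff]
      rw [hstar, Matrix.mul_neg, Matrix.neg_mul, neg_smul, neg_add]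
    · intro i j hij
      have hij' : i ≠ j := fun e => hij (by rw [e])
      rw [Matrix.add_apply, Matrix.smul_apply, Matrix.one_apply_ne hij', smul_zero, zero_add]
      by_cases hi : blk i = last
      · have hj : blk j ≠ last := fun e => hij (hi.trans e.symm)
        rw [Matrix.mul_apply]
        apply Finset.sum_eq_zero
        intro l _
        rw [conjTranspose_apply, hErow j hj l, star_zero, mul_zero]
      · rw [Matrix.mul_apply]
        apply Finset.sum_eq_zero
        intro l _
        rw [Matrix.mul_apply]
        rw [Finset.sum_eq_zero fun k _ => by rw [hErow i hi k, zero_mul], zero_mul]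
    · have e1 : E * amat cf.2 * Eᴴ * x = 0 := by
        rw [Matrix.mul_assoc (E * amat cf.2) _ _, key1, Matrix.mul_zero]
      have e2 : x * (E * amat cf.2 * Eᴴ) = 0 := by
        rw [← Matrix.mul_assoc, ← Matrix.mul_assoc, key2, Matrix.zero_mul, Matrix.zero_mul]
      rw [Matrix.add_mul, Matrix.mul_add, Matrix.smul_mul, Matrix.mul_smul, Matrix.one_mul,
        Matrix.mul_one, e1, e2]
  set Ψr : (ℝ × (Fin m × Fin m → ℝ)) →ₗ[ℝ] kxCent n p blk x :=
    Ψ.codRestrict (kxCent n p blk x) hmem with hΨr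
  have hinj : Function.Injective Ψr := by
    rw [← LinearMap.ker_eq_bot, LinearMap.ker_eq_bot']
    intro cf hcf
    have h0 : ((cf.1 : ℂ) * Complex.I) • (1 : Matrix (Fin n) (Fin n) ℂ)
        + E * amat cf.2 * Eᴴ = 0 := congrArg Subtype.val hcf
    have hz : (E * amat cf.2 * Eᴴ) s0 s0 = 0 := by
      rw [Matrix.mul_apply]
      refine Finset.sum_eq_zero fun l _ => ?_
      rw [Matrix.mul_apply, Finset.sum_eq_zero fun k _ => by rw [hErow s0 hs0 k, zero_mul],
        zero_mul]
    have hc : cf.1 = 0 := by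
      have hent := congrFun (congrFun h0 s0) s0
      rw [Matrix.add_apply, Matrix.smul_apply, Matrix.one_apply_eq, hz, add_zero] at hent
      have h2 : ((cf.1 : ℂ) * Complex.I) = 0 := by
        simpa using hent
      rcases mul_eq_zero.mp h2 with h3 | h3
      · exact_mod_cast h3
      · exact absurd h3 Complex.I_ne_zero
    have hf : amat cf.2 = 0 := by
      have hEA : E * (amat cf.2 * Eᴴ) = 0 := by
        have h4 := h0
        rw [hc] at h4
        simpa [Matrix.mul_assoc] using h4
      have h4 : amat cf.2 * Eᴴ = 0 := hEinj _ hEA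
      have h5 := congrArg conjTranspose h4
      rw [conjTranspose_mul, conjTranspose_conjTranspose, conjTranspose_zero] at h5
      have h6 : (amat cf.2)ᴴ = 0 := hEinj _ h5
      have h7 := congrArg conjTranspose h6
      rwa [conjTranspose_conjTranspose, conjTranspose_zero] at h7
    have hf2 : cf.2 = 0 := amat_inj _ hf
    exact Prod.ext hc hf2
  have hrank := LinearMap.finrank_le_finrank_of_injective hinj
  have hfin : finrank ℝ (ℝ × (Fin m × Fin m → ℝ)) = 1 + m ^ 2 := by
    rw [Module.finrank_prod, Module.finrank_self, Module.finrank_pi]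
    simp [Fintype.card_prod, pow_two]
  rw [hfin] at hrank
  exact hrank

/-! ### The explicit element attaining the bound -/

noncomputable def x0Aux {n p N1 np : ℕ} (blk : Fin n → Fin p) (last : Fin p)
    (eS : Fin N1 ≃ {i : Fin n // blk i ≠ last})
    (eT : Fin np ≃ {i : Fin n // blk i = last}) : Matrix (Fin n) (Fin n) ℂ :=
  Matrix.of fun i j =>
    if hi : blk i = last then
      if hj : blk j = last then 0
      else if ((eT.symm ⟨i, hi⟩ : Fin np) : ℕ) = ((eS.symm ⟨j, hj⟩ : Fin N1) : ℕ)
        then -((((eS.symm ⟨j, hj⟩ : Fin N1) : ℕ) : ℝ) + 1 : ℂ) else 0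
    else
      if hj : blk j = last then
        if ((eT.symm ⟨j, hj⟩ : Fin np) : ℕ) = ((eS.symm ⟨i, hi⟩ : Fin N1) : ℕ)
          then ((((eS.symm ⟨i, hi⟩ : Fin N1) : ℕ) : ℝ) + 1 : ℂ) else 0
      else if blk i = blk j then 0
      else if i < j then 1 else -1

section PartB

variable {n p N1 np : ℕ} (blk : Fin n → Fin p) (last : Fin p)
    (eS : Fin N1 ≃ {i : Fin n // blk i ≠ last})
    (eT : Fin np ≃ {i : Fin n // blk i = last})

lemma x0_TT (i j : Fin n) (hi : blk i = last) (hj : blk j = last) :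
    x0Aux blk last eS eT i j = 0 := by
  simp only [x0Aux, Matrix.of_apply]
  rw [dif_pos hi, dif_pos hj]

lemma x0_ST (k : Fin N1) (t : Fin np) :
    x0Aux blk last eS eT (eS k).1 (eT t).1
      = if (t : ℕ) = (k : ℕ) then ((((k : ℕ) : ℝ) + 1 : ℝ) : ℂ) else 0 := by
  simp only [x0Aux, Matrix.of_apply]
  rw [dif_neg (eS k).2, dif_pos (eT t).2]
  simp

lemma x0_TS (t : Fin np) (k : Fin N1) :
    x0Aux blk last eS eT (eT t).1 (eS k).1
      = if (t : ℕ) = (k : ℕ) then -((((k : ℕ) : ℝ) + 1 : ℝ) : ℂ) else 0 := by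
  simp only [x0Aux, Matrix.of_apply]
  rw [dif_pos (eT t).2, dif_neg (eS k).2]
  simp

lemma x0_SS (k l : Fin N1) :
    x0Aux blk last eS eT (eS k).1 (eS l).1
      = if blk (eS k).1 = blk (eS l).1 then 0
        else if (eS k).1 < (eS l).1 then 1 else -1 := by
  simp only [x0Aux, Matrix.of_apply]
  rw [dif_neg (eS k).2, dif_neg (eS l).2]

lemma x0_real (i j : Fin n) : (x0Aux blk last eS eT i j).im = 0 := by
  simp only [x0Aux, Matrix.of_apply]
  split_ifs <;> simp

lemma x0_blk (i j : Fin n) (h : blk i = blk j) : x0Aux blk last eS eT i j = 0 := by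
  simp only [x0Aux, Matrix.of_apply]
  by_cases hi : blk i = last
  · rw [dif_pos hi, dif_pos (h.symm.trans hi)]
  · rw [dif_neg hi, dif_neg (fun hj => hi (h.trans hj)), if_pos h]

lemma x0_transpose : (x0Aux blk last eS eT)ᵀ = -(x0Aux blk last eS eT) := by
  ext i j
  rw [Matrix.transpose_apply, Matrix.neg_apply]
  simp only [x0Aux, Matrix.of_apply]
  by_cases hi : blk i = last <;> by_cases hj : blk j = last
  · rw [dif_pos hi, dif_pos hj, dif_pos hj, dif_pos hi]
    simp
  · rw [dif_pos hi, dif_neg hj, dif_neg hj, dif_pos hi]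
    split_ifs with h
    · rw [neg_neg]
    · simp
  · rw [dif_neg hi, dif_pos hj, dif_pos hj, dif_neg hi]
    split_ifs with h
    · rfl
    · simp
  · rw [dif_neg hi, dif_neg hj, dif_neg hj, dif_neg hi]
    by_cases hb : blk i = blk j
    · rw [if_pos hb.symm, if_pos hb]
      simp
    · rw [if_neg (fun e => hb e.symm), if_neg hb]
      have hij : i ≠ j := fun e => hb (congrArg blk e)
      rcases lt_trichotomy i j with h | h | h
      · rw [if_neg (asymm h), if_pos h]
      · exact absurd h hij
      · rw [if_pos h, if_neg (asymm h)]
        rw [neg_neg]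

lemma x0_conjT : (x0Aux blk last eS eT)ᴴ = -(x0Aux blk last eS eT) := by
  ext i j
  rw [conjTranspose_apply, Matrix.neg_apply]
  have h := congrFun (congrFun (x0_transpose blk last eS eT) i) j
  rw [Matrix.transpose_apply, Matrix.neg_apply] at h
  rw [Complex.star_def, Complex.conj_eq_iff_im.mpr (x0_real blk last eS eT j i), h]

end PartB

theorem upper_aux {n p N1 np : ℕ} (blk : Fin n → Fin p) (last : Fin p)
    (eS : Fin N1 ≃ {i : Fin n // blk i ≠ last})
    (eT : Fin np ≃ {i : Fin n // blk i = last})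
    (hp3 : 3 ≤ p) (hfib : ∀ j : Fin p, ∃ i, blk i = j)
    (hN1pos : 0 < N1) (hlt : N1 < np) :
    finrank ℝ (kxCent n p blk (x0Aux blk last eS eT)) ≤ 1 + (np - N1) ^ 2 := by
  classical
  set m := np - N1 with hm
  set x0 := x0Aux blk last eS eT with hx0
  set k0 : Fin N1 := ⟨0, hN1pos⟩ with hk0
  set castL : Fin N1 → Fin np := fun k => ⟨(k : ℕ), lt_trans k.isLt hlt⟩ with hcastL
  set uV : Fin m → Fin np := fun r => ⟨N1 + (r : ℕ), by have := r.isLt; omega⟩ with huV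
  set Φ : Matrix (Fin n) (Fin n) ℂ →ₗ[ℝ] ℝ × (Fin m × Fin m → ℝ) :=
    { toFun := fun Z => ((Z (eS k0).1 (eS k0).1).im,
        fun rr => if (rr.1 : ℕ) < (rr.2 : ℕ)
          then (Z (eT (uV rr.1)).1 (eT (uV rr.2)).1).re
          else (Z (eT (uV rr.1)).1 (eT (uV rr.2)).1).im)
      map_add' := by
        intro Y Z
        refine Prod.ext ?_ ?_
        · simp only [Matrix.add_apply, Complex.add_im, Prod.fst_add]
        · funext rr
          by_cases h : (rr.1 : ℕ) < (rr.2 : ℕ)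
          · simp only [Prod.snd_add, Pi.add_apply, if_pos h, Matrix.add_apply,
              Complex.add_re]
          · simp only [Prod.snd_add, Pi.add_apply, if_neg h, Matrix.add_apply,
              Complex.add_im]
      map_smul' := by
        intro c Z
        refine Prod.ext ?_ ?_
        · simp only [Matrix.smul_apply, Complex.real_smul, Complex.mul_im,
            Complex.ofReal_re, Complex.ofReal_im, RingHom.id_apply, Prod.smul_fst,
            smul_eq_mul]
          ring
        · funext rr
          by_cases h : (rr.1 : ℕ) < (rr.2 : ℕ)
          · simp only [Prod.smul_snd, Pi.smul_apply, if_pos h, Matrix.smul_apply,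
              Complex.real_smul, Complex.mul_re, Complex.ofReal_re, Complex.ofReal_im,
              RingHom.id_apply, smul_eq_mul]
            ring
          · simp only [Prod.smul_snd, Pi.smul_apply, if_neg h, Matrix.smul_apply,
              Complex.real_smul, Complex.mul_im, Complex.ofReal_re, Complex.ofReal_im,
              RingHom.id_apply, smul_eq_mul]
            ring } with hΦ
  have hinj : ∀ Z ∈ kxCent n p blk x0, Φ Z = 0 → Z = 0 := by
    intro Z hZ hZ0
    obtain ⟨hZ1, hZ2, hZ3⟩ := hZ
    have heq : ∀ a b, ∑ c, Z a c * x0 c b = ∑ c, x0 a c * Z c b := by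
      intro a b
      have h := congrFun (congrFun hZ3 a) b
      rwa [Matrix.mul_apply, Matrix.mul_apply] at h
    have x0TT : ∀ (i j : Fin n), blk i = last → blk j = last → x0 i j = 0 := by
      intro i j hi hj
      rw [hx0]
      exact x0_TT blk last eS eT i j hi hj
    have x0ST : ∀ (k : Fin N1) (t : Fin np), x0 (eS k).1 (eT t).1
        = if (t : ℕ) = (k : ℕ) then ((((k : ℕ) : ℝ) + 1 : ℝ) : ℂ) else 0 := by
      intro k t
      rw [hx0]
      exact x0_ST blk last eS eT k t
    have x0TS : ∀ (t : Fin np) (k : Fin N1), x0 (eT t).1 (eS k).1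
        = if (t : ℕ) = (k : ℕ) then -((((k : ℕ) : ℝ) + 1 : ℝ) : ℂ) else 0 := by
      intro t k
      rw [hx0]
      exact x0_TS blk last eS eT t k
    have x0SS : ∀ (k l : Fin N1), x0 (eS k).1 (eS l).1
        = if blk (eS k).1 = blk (eS l).1 then 0
          else if (eS k).1 < (eS l).1 then 1 else -1 := by
      intro k l
      rw [hx0]
      exact x0_SS blk last eS eT k l
    -- Step A : the equation at (sV j, tV i)
    have stepA : ∀ (j : Fin N1) (i : Fin np),
        (∑ c, Z (eS j).1 c * x0 c (eT i).1)
          = ((((j : ℕ) : ℝ) + 1 : ℝ) : ℂ) * Z (eT (castL j)).1 (eT i).1 := by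
      intro j i
      rw [heq]
      rw [Fintype.sum_eq_single ((eT (castL j)).1)]
      · rw [x0ST j (castL j), if_pos rfl]
      · intro c hc
        by_cases hcb : blk c = last
        · have hct : c = (eT (eT.symm ⟨c, hcb⟩)).1 := by simp
          rw [hct, x0ST, if_neg, zero_mul]
          intro hval
          apply hc
          have hee : eT.symm ⟨c, hcb⟩ = castL j := Fin.ext hval
          rw [hct, hee]
        · rw [hZ2 c (eT i).1 (by rw [(eT i).2]; exact hcb), mul_zero]
    have stepA1 : ∀ (j k : Fin N1),
        ((((k : ℕ) : ℝ) + 1 : ℝ) : ℂ) * Z (eS j).1 (eS k).1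
          = ((((j : ℕ) : ℝ) + 1 : ℝ) : ℂ) * Z (eT (castL j)).1 (eT (castL k)).1 := by
      intro j k
      have h := stepA j (castL k)
      rw [Fintype.sum_eq_single ((eS k).1)] at h
      · rw [x0ST k (castL k), if_pos rfl, mul_comm] at h
        exact h
      · intro c hc
        by_cases hcb : blk c = last
        · rw [x0TT c _ hcb (eT (castL k)).2, mul_zero]
        · have hcs : c = (eS (eS.symm ⟨c, hcb⟩)).1 := by simp
          rw [hcs, x0ST, if_neg, mul_zero]
          intro hval
          apply hc
          have hee : eS.symm ⟨c, hcb⟩ = k := Fin.ext hval.symm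
          rw [hcs, hee]
    have hdne : ∀ j : Fin N1, ((((j : ℕ) : ℝ) + 1 : ℝ) : ℂ) ≠ 0 := by
      intro j
      rw [Complex.ofReal_ne_zero]
      positivity
    have stepA2 : ∀ (j : Fin N1) (i : Fin np), N1 ≤ (i : ℕ) →
        Z (eT (castL j)).1 (eT i).1 = 0 := by
      intro j i hi
      have h := stepA j i
      rw [Finset.sum_eq_zero] at h
      · exact (mul_eq_zero.mp h.symm).resolve_left (hdne j)
      · intro c _
        by_cases hcb : blk c = last
        · rw [x0TT c _ hcb (eT i).2, mul_zero]
        · have hcs : c = (eS (eS.symm ⟨c, hcb⟩)).1 := by simp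
          rw [hcs, x0ST, if_neg (by have := (eS.symm ⟨c, hcb⟩).isLt; omega), mul_zero]
    -- Step B : the equation at (tV t, sV k)
    have stepB : ∀ (t : Fin np) (k : Fin N1),
        Z (eT t).1 (eT (castL k)).1 * -((((k : ℕ) : ℝ) + 1 : ℝ) : ℂ)
          = ∑ c, x0 (eT t).1 c * Z c (eS k).1 := by
      intro t k
      rw [← heq]
      rw [Fintype.sum_eq_single ((eT (castL k)).1)]
      · rw [x0TS (castL k) k, if_pos rfl]
      · intro c hc
        by_cases hcb : blk c = last
        · have hct : c = (eT (eT.symm ⟨c, hcb⟩)).1 := by simp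
          rw [hct, x0TS, if_neg, mul_zero]
          intro hval
          apply hc
          have hee : eT.symm ⟨c, hcb⟩ = castL k := Fin.ext hval
          rw [hct, hee]
        · rw [hZ2 (eT t).1 c (by rw [(eT t).2]; exact fun e => hcb e.symm), zero_mul]
    have stepB1 : ∀ (t k : Fin N1),
        ((((k : ℕ) : ℝ) + 1 : ℝ) : ℂ) * Z (eT (castL t)).1 (eT (castL k)).1
          = ((((t : ℕ) : ℝ) + 1 : ℝ) : ℂ) * Z (eS t).1 (eS k).1 := by
      intro t k
      have h := stepB (castL t) k
      rw [Fintype.sum_eq_single ((eS t).1)] at h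
      · rw [x0TS (castL t) t, if_pos rfl] at h
        linear_combination -h
      · intro c hc
        by_cases hcb : blk c = last
        · rw [x0TT _ c (eT (castL t)).2 hcb, zero_mul]
        · have hcs : c = (eS (eS.symm ⟨c, hcb⟩)).1 := by simp
          rw [hcs, x0TS, if_neg, zero_mul]
          intro hval
          apply hc
          have hee : eS.symm ⟨c, hcb⟩ = t := Fin.ext hval.symm
          rw [hcs, hee]
    have stepB2 : ∀ (t : Fin np), N1 ≤ (t : ℕ) → ∀ (k : Fin N1),
        Z (eT t).1 (eT (castL k)).1 = 0 := by
      intro t ht k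
      have h := stepB t k
      rw [Finset.sum_eq_zero] at h
      · rcases mul_eq_zero.mp h with h1 | h1
        · exact h1
        · exact absurd h1 (neg_ne_zero.mpr (hdne k))
      · intro c _
        by_cases hcb : blk c = last
        · rw [x0TT _ c (eT t).2 hcb, zero_mul]
        · have hcs : c = (eS (eS.symm ⟨c, hcb⟩)).1 := by simp
          rw [hcs, x0TS, if_neg (by have := (eS.symm ⟨c, hcb⟩).isLt; omega), zero_mul]
    -- consequences
    have hZSS : ∀ j k : Fin N1, j ≠ k → Z (eS j).1 (eS k).1 = 0 := by
      intro j k hjk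
      have h1 := stepA1 j k
      have h2 := stepB1 j k
      have h3 : (((((k : ℕ) : ℝ) + 1 : ℝ) : ℂ) * ((((k : ℕ) : ℝ) + 1 : ℝ) : ℂ)
          - ((((j : ℕ) : ℝ) + 1 : ℝ) : ℂ) * ((((j : ℕ) : ℝ) + 1 : ℝ) : ℂ))
          * Z (eS j).1 (eS k).1 = 0 := by
        linear_combination ((((k : ℕ) : ℝ) + 1 : ℝ) : ℂ) * h1
          + ((((j : ℕ) : ℝ) + 1 : ℝ) : ℂ) * h2
      have h4 : (((((k : ℕ) : ℝ) + 1 : ℝ) : ℂ) * ((((k : ℕ) : ℝ) + 1 : ℝ) : ℂ)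
          - ((((j : ℕ) : ℝ) + 1 : ℝ) : ℂ) * ((((j : ℕ) : ℝ) + 1 : ℝ) : ℂ)) ≠ 0 := by
        have hcast : (((((k : ℕ) : ℝ) + 1 : ℝ) : ℂ) * ((((k : ℕ) : ℝ) + 1 : ℝ) : ℂ)
            - ((((j : ℕ) : ℝ) + 1 : ℝ) : ℂ) * ((((j : ℕ) : ℝ) + 1 : ℝ) : ℂ))
            = (((((k : ℕ) : ℝ) + 1) * (((k : ℕ) : ℝ) + 1)
              - (((j : ℕ) : ℝ) + 1) * (((j : ℕ) : ℝ) + 1) : ℝ) : ℂ) := by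
          push_cast
          ring
        rw [hcast, Complex.ofReal_ne_zero]
        have hk : ((k : ℕ) : ℝ) ≠ ((j : ℕ) : ℝ) := by
          intro e
          exact hjk (Fin.ext (Nat.cast_injective e).symm)
        have hk0 : (0 : ℝ) ≤ ((k : ℕ) : ℝ) := Nat.cast_nonneg _
        have hj0 : (0 : ℝ) ≤ ((j : ℕ) : ℝ) := Nat.cast_nonneg _
        intro e
        rcases lt_trichotomy ((k : ℕ) : ℝ) ((j : ℕ) : ℝ) with h | h | h
        · nlinarith
        · exact hk h
        · nlinarith
      exact (mul_eq_zero.mp h3).resolve_left h4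
    have hZTT : ∀ j k : Fin N1, j ≠ k →
        Z (eT (castL j)).1 (eT (castL k)).1 = 0 := by
      intro j k hjk
      have h := stepA1 j k
      rw [hZSS j k hjk, mul_zero] at h
      exact (mul_eq_zero.mp h.symm).resolve_left (hdne j)
    have hZdiag : ∀ k : Fin N1,
        Z (eS k).1 (eS k).1 = Z (eT (castL k)).1 (eT (castL k)).1 := by
      intro k
      exact mul_left_cancel₀ (hdne k) (stepA1 k k)
    -- the θ-equality
    have hθ : ∀ l k : Fin N1, blk (eS l).1 ≠ blk (eS k).1 →
        Z (eS l).1 (eS l).1 = Z (eS k).1 (eS k).1 := by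
      intro l k hblk
      have hLHS : (∑ c, Z (eS l).1 c * x0 c (eS k).1)
          = Z (eS l).1 (eS l).1 * x0 (eS l).1 (eS k).1 := by
        apply Fintype.sum_eq_single
        intro c hc
        by_cases hcb : blk c = last
        · rw [hZ2 (eS l).1 c (by rw [hcb]; exact (eS l).2), zero_mul]
        · have hcs : c = (eS (eS.symm ⟨c, hcb⟩)).1 := by simp
          have hcl : l ≠ eS.symm ⟨c, hcb⟩ := fun e => hc (by rw [hcs, ← e])
          rw [hcs, hZSS l _ hcl, zero_mul]
      have hRHS : (∑ c, x0 (eS l).1 c * Z c (eS k).1)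
          = x0 (eS l).1 (eS k).1 * Z (eS k).1 (eS k).1 := by
        apply Fintype.sum_eq_single
        intro c hc
        by_cases hcb : blk c = last
        · rw [hZ2 c (eS k).1 (by rw [hcb]; exact fun e => (eS k).2 e.symm), mul_zero]
        · have hcs : c = (eS (eS.symm ⟨c, hcb⟩)).1 := by simp
          have hck : eS.symm ⟨c, hcb⟩ ≠ k := fun e => hc (by rw [hcs, e])
          rw [hcs, hZSS _ k hck, mul_zero]
      have h := hLHS.symm.trans ((heq (eS l).1 (eS k).1).trans hRHS)
      rw [x0SS l k, if_neg hblk] at h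
      by_cases hord : (eS l).1 < (eS k).1
      · rw [if_pos hord, mul_one, one_mul] at h
        exact h
      · rw [if_neg hord] at h
        have h2 : -(Z (eS l).1 (eS l).1) = -(Z (eS k).1 (eS k).1) := by
          linear_combination h
        exact neg_inj.mp h2
    have hθall : ∀ l k : Fin N1, Z (eS l).1 (eS l).1 = Z (eS k).1 (eS k).1 := by
      intro l k
      by_cases hb : blk (eS l).1 = blk (eS k).1
      · have hex : ∃ j' : Fin p, j' ≠ blk (eS l).1 ∧ j' ≠ last := by
          by_contra hcon
          push_neg at hcon
          have hsub : (Finset.univ : Finset (Fin p)) ⊆ {blk (eS l).1, last} := by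
            intro j _
            rcases eq_or_ne j (blk (eS l).1) with e | e
            · simp [e]
            · simp [hcon j e]
          have hcard := Finset.card_le_card hsub
          have hle2 : ({blk (eS l).1, last} : Finset (Fin p)).card ≤ 2 :=
            (Finset.card_insert_le _ _).trans (by simp)
          rw [Finset.card_univ, Fintype.card_fin] at hcard
          omega
        obtain ⟨j', hj1, hj2⟩ := hex
        obtain ⟨v, hv⟩ := hfib j'
        have hvS : blk v ≠ last := by rw [hv]; exact hj2
        have hveq : v = (eS (eS.symm ⟨v, hvS⟩)).1 := by simp
        have hbv : blk (eS (eS.symm ⟨v, hvS⟩)).1 ≠ blk (eS l).1 := by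
          rw [← hveq, hv]; exact hj1
        have e1 := hθ l (eS.symm ⟨v, hvS⟩) (fun e => hbv e.symm)
        have e2 := hθ (eS.symm ⟨v, hvS⟩) k (fun e => hbv (e.trans hb.symm))
        exact e1.trans e2
      · exact hθ l k hb
    -- read off the vanishing of Φ
    have h0im : (Z (eS k0).1 (eS k0).1).im = 0 := congrArg Prod.fst hZ0
    have hf : ∀ rr : Fin m × Fin m, (if (rr.1 : ℕ) < (rr.2 : ℕ)
        then (Z (eT (uV rr.1)).1 (eT (uV rr.2)).1).re
        else (Z (eT (uV rr.1)).1 (eT (uV rr.2)).1).im) = 0 :=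
      fun rr => congrFun (congrArg Prod.snd hZ0) rr
    have hdiagre : ∀ i : Fin n, (Z i i).re = 0 := by
      intro i
      have h := congrFun (congrFun hZ1 i) i
      rw [conjTranspose_apply, Matrix.neg_apply] at h
      have h2 := congrArg Complex.re h
      rw [Complex.star_def, Complex.conj_re, Complex.neg_re] at h2
      linarith
    have hSdiag : ∀ k : Fin N1, Z (eS k).1 (eS k).1 = 0 := by
      intro k
      have h := congrArg Complex.im (hθall k k0)
      refine Complex.ext ?_ ?_
      · rw [Complex.zero_re]
        exact hdiagre _
      · rw [Complex.zero_im, h, h0im]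
    have hstarT : ∀ r r' : Fin m, star (Z (eT (uV r)).1 (eT (uV r')).1)
        = -(Z (eT (uV r')).1 (eT (uV r)).1) := by
      intro r r'
      have h := congrFun (congrFun hZ1 (eT (uV r')).1) (eT (uV r)).1
      rwa [conjTranspose_apply, Matrix.neg_apply] at h
    have hfreele : ∀ r r' : Fin m, (r : ℕ) ≤ (r' : ℕ) →
        Z (eT (uV r)).1 (eT (uV r')).1 = 0 := by
      intro r r' hle
      rcases Nat.lt_or_ge (r : ℕ) (r' : ℕ) with h | h
      · have hre : (if (r : ℕ) < (r' : ℕ) then (Z (eT (uV r)).1 (eT (uV r')).1).re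
            else (Z (eT (uV r)).1 (eT (uV r')).1).im) = 0 := hf (r, r')
        rw [if_pos h] at hre
        have him : (if (r' : ℕ) < (r : ℕ) then (Z (eT (uV r')).1 (eT (uV r)).1).re
            else (Z (eT (uV r')).1 (eT (uV r)).1).im) = 0 := hf (r', r)
        rw [if_neg (by omega)] at him
        have h2 := congrArg Complex.im (hstarT r r')
        rw [Complex.star_def, Complex.conj_im, Complex.neg_im] at h2
        refine Complex.ext ?_ ?_
        · rw [Complex.zero_re]; exact hre
        · rw [Complex.zero_im]
          have : (Z (eT (uV r)).1 (eT (uV r')).1).im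
              = (Z (eT (uV r')).1 (eT (uV r)).1).im := by linarith
          rw [this, him]
      · have hrr : r = r' := Fin.ext (by omega)
        subst hrr
        have him : (if (r : ℕ) < (r : ℕ) then (Z (eT (uV r)).1 (eT (uV r)).1).re
            else (Z (eT (uV r)).1 (eT (uV r)).1).im) = 0 := hf (r, r)
        rw [if_neg (lt_irrefl _)] at him
        refine Complex.ext ?_ ?_
        · rw [Complex.zero_re]; exact hdiagre _
        · rw [Complex.zero_im]; exact him
    have hfree : ∀ r r' : Fin m, Z (eT (uV r)).1 (eT (uV r')).1 = 0 := by
      intro r r'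
      rcases le_or_gt (r : ℕ) (r' : ℕ) with h | h
      · exact hfreele r r' h
      · have h2 := hstarT r' r
        rw [hfreele r' r (le_of_lt h), star_zero] at h2
        exact (neg_eq_zero.mp h2.symm)
    -- conclude Z = 0
    ext i j
    rw [Matrix.zero_apply]
    by_cases hi : blk i = last <;> by_cases hj : blk j = last
    · have hi' : i = (eT (eT.symm ⟨i, hi⟩)).1 := by simp
      have hj' : j = (eT (eT.symm ⟨j, hj⟩)).1 := by simp
      rw [hi', hj']
      by_cases ha : ((eT.symm ⟨i, hi⟩ : Fin np) : ℕ) < N1 <;>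
        by_cases hb : ((eT.symm ⟨j, hj⟩ : Fin np) : ℕ) < N1
      · have ha' : (eT.symm ⟨i, hi⟩ : Fin np) = castL ⟨_, ha⟩ := Fin.ext rfl
        have hb' : (eT.symm ⟨j, hj⟩ : Fin np) = castL ⟨_, hb⟩ := Fin.ext rfl
        rw [ha', hb']
        by_cases hab : (⟨((eT.symm ⟨i, hi⟩ : Fin np) : ℕ), ha⟩ : Fin N1)
            = ⟨((eT.symm ⟨j, hj⟩ : Fin np) : ℕ), hb⟩
        · rw [← hab, ← hZdiag]
          exact hSdiag _
        · exact hZTT _ _ hab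
      · have ha' : (eT.symm ⟨i, hi⟩ : Fin np) = castL ⟨_, ha⟩ := Fin.ext rfl
        rw [ha']
        exact stepA2 _ _ (by omega)
      · have hb' : (eT.symm ⟨j, hj⟩ : Fin np) = castL ⟨_, hb⟩ := Fin.ext rfl
        rw [hb']
        exact stepB2 _ (by omega) _
      · have ha' : (eT.symm ⟨i, hi⟩ : Fin np)
            = uV ⟨((eT.symm ⟨i, hi⟩ : Fin np) : ℕ) - N1, by
                have := (eT.symm ⟨i, hi⟩ : Fin np).isLt; omega⟩ := by
          apply Fin.ext
          show ((eT.symm ⟨i, hi⟩ : Fin np) : ℕ)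
            = N1 + (((eT.symm ⟨i, hi⟩ : Fin np) : ℕ) - N1)
          omega
        have hb' : (eT.symm ⟨j, hj⟩ : Fin np)
            = uV ⟨((eT.symm ⟨j, hj⟩ : Fin np) : ℕ) - N1, by
                have := (eT.symm ⟨j, hj⟩ : Fin np).isLt; omega⟩ := by
          apply Fin.ext
          show ((eT.symm ⟨j, hj⟩ : Fin np) : ℕ)
            = N1 + (((eT.symm ⟨j, hj⟩ : Fin np) : ℕ) - N1)
          omega
        rw [ha', hb']
        exact hfree _ _
    · exact hZ2 i j (fun e => hj (e.symm.trans hi))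
    · exact hZ2 i j (fun e => hi (e.trans hj))
    · have hi' : i = (eS (eS.symm ⟨i, hi⟩)).1 := by simp
      have hj' : j = (eS (eS.symm ⟨j, hj⟩)).1 := by simp
      rw [hi', hj']
      by_cases hij : (eS.symm ⟨i, hi⟩ : Fin N1) = eS.symm ⟨j, hj⟩
      · rw [← hij]
        exact hSdiag _
      · exact hZSS _ _ hij
  -- wrap up
  have hinj2 : Function.Injective
      (Φ.comp (kxCent n p blk x0).subtype) := by
    rw [← LinearMap.ker_eq_bot, LinearMap.ker_eq_bot']
    intro z hz
    exact Subtype.ext (hinj z.1 z.2 hz)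
  have hrank := LinearMap.finrank_le_finrank_of_injective hinj2
  rw [Module.finrank_prod, Module.finrank_self, Module.finrank_pi] at hrank
  simpa [Fintype.card_prod, pow_two] using hrank

theorem stmt18 (n p : ℕ) (hp : 3 ≤ p) (blk : Fin n → Fin p)
    -- the block sizes n_j
    (N : Fin p → ℕ)
    (hN : ∀ j : Fin p, N j = (Finset.univ.filter (fun i => blk i = j)).card)
    (hpos : ∀ j : Fin p, 1 ≤ N j)
    (hmono : ∀ j1 j2 : Fin p, j1 ≤ j2 → N j1 ≤ N j2)
    -- N_1 = n_1 + … + n_{p-1} < n_p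
    (N1 : ℕ)
    (hN1 : N1 = ∑ j ∈ Finset.univ.filter (fun j : Fin p => (j : ℕ) < p - 1), N j)
    (hlt : N1 < N ⟨p - 1, by omega⟩) :
    -- every x ∈ m has centralizer in k of dimension at least 1 + (n_p − N_1)²
    (∀ x : Matrix (Fin n) (Fin n) ℂ, xᴴ = -x → (∀ i j, blk i = blk j → x i j = 0) →
      1 + (N ⟨p - 1, by omega⟩ - N1) ^ 2 ≤ finrank ℝ (kxCent n p blk x)) ∧
    -- and the bound is attained at some real skew-symmetric x0 ∈ m̃
    (∃ x0 : Matrix (Fin n) (Fin n) ℂ,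
      (∀ i j, (x0 i j).im = 0) ∧ x0ᵀ = -x0 ∧ (∀ i j, blk i = blk j → x0 i j = 0) ∧
      finrank ℝ (kxCent n p blk x0) = 1 + (N ⟨p - 1, by omega⟩ - N1) ^ 2) := by
  classical
  have hp0 : 0 < p := by omega
  set last : Fin p := ⟨p - 1, by omega⟩ with hlast
  have hlastval : (last : ℕ) = p - 1 := rfl
  have hcT : Fintype.card {i : Fin n // blk i = last} = N last := by
    rw [Fintype.card_subtype]
    exact (hN last).symm
  have hidx : (Finset.univ.filter fun j : Fin p => (j : ℕ) < p - 1)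
      = Finset.univ.filter fun j : Fin p => j ≠ last := by
    ext j
    simp only [Finset.mem_filter, Finset.mem_univ, true_and]
    constructor
    · intro h e
      rw [e, hlastval] at h
      omega
    · intro h
      have hj := j.isLt
      have hne : (j : ℕ) ≠ p - 1 := fun e => h (Fin.ext (e.trans hlastval.symm))
      omega
  have hcS : Fintype.card {i : Fin n // blk i ≠ last} = N1 := by
    rw [Fintype.card_subtype, hN1, hidx]
    rw [Finset.card_eq_sum_card_fiberwise
      (f := blk) (t := Finset.univ.filter fun j : Fin p => j ≠ last)
      (fun i hi => by
        simp only [Finset.mem_coe, Finset.mem_filter, Finset.mem_univ, true_and] at hi ⊢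
        exact hi)]
    refine Finset.sum_congr rfl ?_
    intro j hj
    rw [hN j]
    congr 1
    ext i
    simp only [Finset.mem_filter, Finset.mem_univ, true_and]
    constructor
    · rintro ⟨h1, h2⟩
      exact h2
    · intro h2
      refine ⟨?_, h2⟩
      rw [h2]
      exact (Finset.mem_filter.mp hj).2
  have hfib : ∀ j : Fin p, ∃ i, blk i = j := by
    intro j
    have h1 : 0 < (Finset.univ.filter fun i => blk i = j).card := by
      rw [← hN j]
      exact hpos j
    obtain ⟨i, hi⟩ := Finset.card_pos.mp h1
    exact ⟨i, (Finset.mem_filter.mp hi).2⟩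
  have hj0 : (⟨0, hp0⟩ : Fin p) ≠ last := by
    intro e
    have h2 := congrArg Fin.val e
    rw [hlastval] at h2
    simp at h2
    omega
  have hSne : ∃ i, blk i ≠ last := by
    obtain ⟨i, hi⟩ := hfib ⟨0, hp0⟩
    exact ⟨i, by rw [hi]; exact hj0⟩
  have hN1pos : 0 < N1 := by
    rw [← hcS]
    obtain ⟨i, hi⟩ := hSne
    exact Fintype.card_pos_iff.mpr ⟨⟨i, hi⟩⟩
  have hltnp : N1 < N last := hlt
  constructor
  · intro x hx1 hx2
    have h := lower_aux blk last hSne x hx1 hx2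
    rw [hcT, hcS] at h
    exact h
  · set eS := (Fintype.equivFinOfCardEq hcS).symm with heS
    set eT := (Fintype.equivFinOfCardEq hcT).symm with heT
    refine ⟨x0Aux blk last eS eT, x0_real blk last eS eT, x0_transpose blk last eS eT,
      x0_blk blk last eS eT, ?_⟩
    apply le_antisymm
    · exact upper_aux blk last eS eT hp hfib hN1pos hltnp
    · have h := lower_aux blk last hSne (x0Aux blk last eS eT)
        (x0_conjT blk last eS eT) (x0_blk blk last eS eT)
      rw [hcT, hcS] at h
      exact h
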